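/- For any tree-representable laminar family L over V with a dummy root V, and any vertex u, let l(u) be the inclusion-minimal set in L ∪ {V} containing u. Then for any set X ∈ L and any pair u, v ∈ V, the pair (u,v) is separated by X (exactly one of u, v lies in X) if and only if X lies on the tree path from l(u) to l(v) excluding their lowest common ancestor. -/
import Mathlib


variable {V : Type*}

/-- A laminar family: any two members are nested or disjoint. -/
def Laminar (L : Set (Set V)) : Prop :=
  ∀ X ∈ L, ∀ Y ∈ L, X ⊆ Y ∨ Y ⊆ X ∨ Disjoint X Y

/-- In the inclusion tree of a laminar family `L` augmented with the dummy root
`V`, let `lu = l(u)`, `lv = l(v)` be the minimal sets containing `u`, `v`, and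
`A` their LCA (the minimal common superset of `lu` and `lv` in the family).
Then an edge pair `(u, v)` is separated by `X ∈ L` iff `X` lies on the tree
path from `l(u)` to `l(v)` excluding the LCA, i.e. `X` is an ancestor of
`l(u)` or of `l(v)` that is properly below `A`. -/
theorem laminar_separation_path [Fintype V] (L : Set (Set V)) (hL : Laminar L)
    (u v : V) (lu lv A X : Set V)
    (hlu : lu ∈ insert Set.univ L ∧ u ∈ lu ∧
      ∀ B ∈ insert Set.univ L, u ∈ B → lu ⊆ B)
    (hlv : lv ∈ insert Set.univ L ∧ v ∈ lv ∧
      ∀ B ∈ insert Set.univ L, v ∈ B → lv ⊆ B)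
    (hA : A ∈ insert Set.univ L ∧ lu ⊆ A ∧ lv ⊆ A ∧
      ∀ B ∈ insert Set.univ L, lu ⊆ B → lv ⊆ B → A ⊆ B)
    (hX : X ∈ L) :
    Xor' (u ∈ X) (v ∈ X) ↔ ((lu ⊆ X ∨ lv ⊆ X) ∧ X ⊂ A) := by
  obtain ⟨hluL, hu, hluMin⟩ := hlu
  obtain ⟨hlvL, hv, hlvMin⟩ := hlv
  obtain ⟨hAL, hluA, hlvA, hAMin⟩ := hA
  have hXins : X ∈ insert Set.univ L := Set.mem_insert_of_mem _ hX
  constructor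
  · rintro (⟨huX, hvX⟩ | ⟨hvX, huX⟩)
    · have hlux : lu ⊆ X := hluMin X hXins huX
      have hXsubA : X ⊆ A := by
        rcases hAL with hAu | hAL
        · simp [hAu]
        · rcases hL X hX A hAL with h | h | h
          · exact h
          · exact absurd (h (hlvA hv)) hvX
          · exact absurd rfl (h.ne_of_mem huX (hluA hu))
      exact ⟨Or.inl hlux, hXsubA.ssubset_of_ne (fun he => hvX (he ▸ hlvA hv))⟩
    · have hlvx : lv ⊆ X := hlvMin X hXins hvX
      have hXsubA : X ⊆ A := by
        rcases hAL with hAu | hAL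
        · simp [hAu]
        · rcases hL X hX A hAL with h | h | h
          · exact h
          · exact absurd (h (hluA hu)) huX
          · exact absurd rfl (h.ne_of_mem hvX (hlvA hv))
      exact ⟨Or.inr hlvx, hXsubA.ssubset_of_ne (fun he => huX (he ▸ hluA hu))⟩
  · rintro ⟨h | h, hXA⟩
    · refine Or.inl ⟨h hu, fun hvX => ?_⟩
      exact hXA.not_subset (hAMin X hXins h (hlvMin X hXins hvX))
    · refine Or.inr ⟨h hv, fun huX => ?_⟩
      exact hXA.not_subset (hAMin X hXins (hluMin X hXins huX) h)
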